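/- Let K be a field and let f, g, h ∈ K[x] with f = g ∘ h, where g is nonconstant, deg h = k ≥ 2, and f′ ≠ 0. Let D(t) = Res_X(f(X) − t, f′(X)) ∈ K[t]. Then there exist polynomials A, B ∈ K[t] such that D(t) = A(t)^k · B(t) and deg B ≤ k − 1. Moreover, if char K = 0, then deg B = k − 1. -/

import Mathlib

open Polynomial

/-- The Sylvester matrix of two polynomials `p, q ∈ R[X]` (with respect to their
`natDegree`s): the first `deg q` rows hold the coefficients of `p`, shifted, and
the last `deg p` rows hold the coefficients of `q`, shifted. -/
noncomputable def sylvesterMatrix {R : Type*} [CommRing R] (p q : Polynomial R) :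
    Matrix (Fin (q.natDegree + p.natDegree)) (Fin (q.natDegree + p.natDegree)) R :=
  Matrix.of fun i j =>
    if (i : ℕ) < q.natDegree then
      if (j : ℕ) ≤ p.natDegree + i then p.coeff (p.natDegree + i - j) else 0
    else
      if (j : ℕ) ≤ (i : ℕ) then q.coeff ((i : ℕ) - j) else 0

/-- The resultant `Res_X(p, q)` of two polynomials, as the determinant of their
Sylvester matrix. -/
noncomputable def resultant {R : Type*} [CommRing R] (p q : Polynomial R) : R :=
  (sylvesterMatrix p q).det

section Res
variable {R : Type*} [CommRing R]

lemma resultant_def' (p q : Polynomial R) (a b : ℕ) (ha : p.natDegree = a)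
    (hb : q.natDegree = b) :
    _root_.resultant p q = (Matrix.of fun i j : Fin (b + a) =>
      if (i : ℕ) < b then
        if (j : ℕ) ≤ a + i then p.coeff (a + i - j) else 0
      else
        if (j : ℕ) ≤ (i : ℕ) then q.coeff ((i : ℕ) - j) else 0).det := by
  subst ha hb; rfl

lemma resultant_map {S : Type*} [CommRing S] (φ : R →+* S) (p q : Polynomial R)
    (hp : (p.map φ).natDegree = p.natDegree) (hq : (q.map φ).natDegree = q.natDegree) :
    _root_.resultant (p.map φ) (q.map φ) = φ (_root_.resultant p q) := by
  rw [resultant_def' (p.map φ) (q.map φ) p.natDegree q.natDegree hp hq,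
    resultant_def' p q p.natDegree q.natDegree rfl rfl, RingHom.map_det]
  congr 1
  ext i j
  simp only [RingHom.mapMatrix_apply, Matrix.map_apply, Matrix.of_apply, coeff_map,
    apply_ite φ, map_zero]

lemma det_submatrix_pm {n' n : Type*} [DecidableEq n] [Fintype n] [DecidableEq n'] [Fintype n']
    (A : Matrix n n R) (ρ κ : n' ≃ n) :
    ∃ ε : R, (ε = 1 ∨ ε = -1) ∧ (A.submatrix ρ κ).det = ε * A.det := by
  have h1 : (A.submatrix ρ κ) = (A.submatrix κ κ).submatrix (ρ.trans κ.symm) id := by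
    ext i j; simp
  refine ⟨((Equiv.Perm.sign (ρ.trans κ.symm) : ℤ) : R), ?_, ?_⟩
  · rcases Int.units_eq_one_or (Equiv.Perm.sign (ρ.trans κ.symm)) with h | h <;>
      rw [h] <;> simp
  · rw [h1, Matrix.det_permute, Matrix.det_submatrix_equiv_self]

lemma resultant_swap (p q : Polynomial R) :
    ∃ ε : R, (ε = 1 ∨ ε = -1) ∧ _root_.resultant p q = ε * _root_.resultant q p := by
  have key : sylvesterMatrix p q =
      (sylvesterMatrix q p).submatrix
        (finAddFlip : Fin (q.natDegree + p.natDegree) ≃ Fin (p.natDegree + q.natDegree))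
        (finCongr (add_comm q.natDegree p.natDegree)) := by
    ext i j
    refine Fin.addCases (fun i₀ => ?_) (fun i₀ => ?_) i
    · have hi : ((Fin.castAdd p.natDegree i₀ : Fin (q.natDegree + p.natDegree)) : ℕ) = (i₀ : ℕ) :=
        rfl
      simp only [Matrix.submatrix_apply, finAddFlip_apply_castAdd, sylvesterMatrix,
        Matrix.of_apply, hi, finCongr_apply, Fin.coe_cast, Fin.coe_natAdd]
      rw [if_pos (show (i₀ : ℕ) < q.natDegree from i₀.isLt),
        if_neg (show ¬(p.natDegree + (i₀ : ℕ) < p.natDegree) by omega)]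
    · have hi : ((Fin.natAdd q.natDegree i₀ : Fin (q.natDegree + p.natDegree)) : ℕ)
          = q.natDegree + (i₀ : ℕ) := rfl
      simp only [Matrix.submatrix_apply, finAddFlip_apply_natAdd, sylvesterMatrix,
        Matrix.of_apply, hi, finCongr_apply, Fin.coe_cast, Fin.coe_castAdd]
      rw [if_neg (show ¬(q.natDegree + (i₀ : ℕ) < q.natDegree) by omega),
        if_pos (show (i₀ : ℕ) < p.natDegree from i₀.isLt)]
  obtain ⟨ε, hε, h⟩ := det_submatrix_pm (sylvesterMatrix q p)
    (finAddFlip : Fin (q.natDegree + p.natDegree) ≃ Fin (p.natDegree + q.natDegree))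
    (finCongr (add_comm q.natDegree p.natDegree))
  exact ⟨ε, hε, by rw [_root_.resultant, key, h]; rfl⟩

end Res

section FieldRes
variable {F : Type*} [Field F]

private lemma sum_peel (α : F) (c : ℕ → F) (j : ℕ) :
    ∑ l ∈ Finset.range (j+2), c l * α^(j+1-l)
      = α * (∑ l ∈ Finset.range (j+1), c l * α^(j-l)) + c (j+1) := by
  rw [Finset.sum_range_succ, Finset.mul_sum]
  congr 1
  · exact Finset.sum_congr rfl fun l hl => by
      have hl' : l ≤ j := by
        have := Finset.mem_range.mp hl; omega
      have e : j + 1 - l = (j - l) + 1 := by omega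
      rw [e, pow_succ]; ring
  · simp

private lemma aux_p (α : F) (p : F[X]) (n i j : ℕ) (hn : p.natDegree ≤ n) :
    ∑ l ∈ Finset.range (j+1),
        (if l ≤ n+1+i then ((X - C α) * p).coeff (n+1+i-l) else 0) * α^(j-l)
      = if j ≤ n+i then p.coeff (n+i-j) else 0 := by
  have PC : ∀ s : ℕ,
      ((X - C α) * p).coeff s = (if s = 0 then 0 else p.coeff (s-1)) - α * p.coeff s := by
    intro s
    rw [sub_mul, coeff_sub, coeff_C_mul]
    congr 1
    cases s with
    | zero => simp [mul_coeff_zero]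
    | succ s => simp [coeff_X_mul]
  induction j with
  | zero =>
    rw [Finset.sum_range_one]
    simp only [Nat.zero_le, if_true, pow_zero, mul_one, Nat.sub_zero, PC]
    rw [if_neg (show ¬ (n+1+i = 0) by omega), show n+1+i-1 = n+i from by omega,
      coeff_eq_zero_of_natDegree_lt (show p.natDegree < n+1+i by omega)]
    ring
  | succ j ih =>
    rw [sum_peel α _ j, ih]
    by_cases h1 : j + 1 ≤ n + i
    · rw [if_pos (by omega : j ≤ n + i), if_pos h1,
        if_pos (by omega : j + 1 ≤ n + 1 + i)]
      have e : n + 1 + i - (j+1) = n + i - j := by omega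
      rw [e, PC, if_neg (by omega)]
      have e2 : n + i - j - 1 = n + i - (j+1) := by omega
      rw [e2]; ring
    · by_cases h2 : j = n + i
      · rw [if_pos (by omega : j ≤ n + i), if_neg h1,
          if_pos (by omega : j + 1 ≤ n + 1 + i)]
        have e : n + 1 + i - (j+1) = 0 := by omega
        rw [e, PC, if_pos rfl]
        have e2 : n + i - j = 0 := by omega
        rw [e2]; ring
      · rw [if_neg (by omega : ¬ j ≤ n + i), if_neg h1,
          if_neg (by omega : ¬ j + 1 ≤ n + 1 + i)]
        ring

private lemma aux_q_eval (α : F) (q : F[X]) (i j : ℕ) (hqi : q.natDegree ≤ i) (hij : i ≤ j) :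
    ∑ l ∈ Finset.range (j+1), (if l ≤ i then q.coeff (i-l) else 0) * α^(j-l)
      = α^(j-i) * q.eval α := by
  induction j, hij using Nat.le_induction with
  | base =>
    have h1 : ∀ l ∈ Finset.range (i+1),
        (if l ≤ i then q.coeff (i-l) else 0) * α^(i-l) = q.coeff (i-l) * α^(i-l) := by
      intro l hl
      rw [if_pos (by have := Finset.mem_range.mp hl; omega)]
    rw [Finset.sum_congr rfl h1]
    have h2 : ∑ l ∈ Finset.range (i+1), q.coeff (i-l) * α^(i-l)
        = ∑ l ∈ Finset.range (i+1), q.coeff l * α^l := by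
      have := Finset.sum_range_reflect (fun l => q.coeff l * α^l) (i+1)
      simpa using this
    rw [h2, Nat.sub_self, pow_zero, one_mul,
      eval_eq_sum_range' (lt_of_le_of_lt hqi (Nat.lt_succ_self i)) α]
  | succ j hij ih =>
    rw [sum_peel α _ j, ih, if_neg (by omega)]
    have e : j + 1 - i = (j - i) + 1 := by omega
    rw [e, pow_succ]; ring

private lemma aux_q_rec (α : F) (q : F[X]) (i j : ℕ) (hqi : q.natDegree ≤ i) (hji : j ≤ i) :
    ∑ l ∈ Finset.range (j+1), (if l ≤ i then q.coeff (i-l) else 0) * α^(j-l)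
      = α * (∑ l ∈ Finset.range (j+1), (if l ≤ i+1 then q.coeff (i+1-l) else 0) * α^(j-l))
        + q.coeff (i-j) := by
  revert hji
  induction j with
  | zero =>
    intro _
    simp only [zero_add, Finset.sum_range_one, Nat.zero_le, if_true, Nat.sub_zero,
      pow_zero, mul_one]
    rw [coeff_eq_zero_of_natDegree_lt (show q.natDegree < i + 1 by omega)]
    ring
  | succ j ih =>
    intro hji
    rw [sum_peel α _ j, sum_peel α _ j, ih (by omega),
      if_pos (by omega : j + 1 ≤ i), if_pos (by omega : j + 1 ≤ i + 1),
      show i + 1 - (j + 1) = i - j from by omega]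

private lemma fin_sum_to_range (Nn : ℕ) (c d : ℕ → F) (j : ℕ) (hj : j < Nn) :
    ∑ l : Fin Nn, c (l : ℕ) * (if (l : ℕ) ≤ j then d (l : ℕ) else 0)
      = ∑ l ∈ Finset.range (j+1), c l * d l := by
  rw [Fin.sum_univ_eq_sum_range (fun l => c l * (if l ≤ j then d l else 0)) Nn]
  rw [← Finset.sum_subset (Finset.range_subset_range.mpr (by omega : j + 1 ≤ Nn))
    (fun l _ hl => by
      rw [if_neg (by have := Finset.mem_range.not.mp hl; omega), mul_zero])]
  exact Finset.sum_congr rfl fun l hl => by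
    rw [if_pos (by have := Finset.mem_range.mp hl; omega)]


lemma resultant_C (c : F) (q : F[X]) : _root_.resultant (C c) q = c ^ q.natDegree := by
  rw [resultant_def' (C c) q 0 q.natDegree (natDegree_C c) rfl]
  have key : (Matrix.of fun i j : Fin (q.natDegree + 0) =>
      if (i : ℕ) < q.natDegree then
        if (j : ℕ) ≤ 0 + i then (C c).coeff (0 + i - j) else 0
      else
        if (j : ℕ) ≤ (i : ℕ) then q.coeff ((i : ℕ) - j) else 0)
      = Matrix.diagonal (fun _ => c) := by
    ext i j
    have hi : (i : ℕ) < q.natDegree := by have := i.isLt; omega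
    rw [Matrix.of_apply, if_pos hi, Matrix.diagonal_apply]
    by_cases hij : i = j
    · subst hij
      rw [if_pos (show (i:ℕ) ≤ 0 + i by omega), if_pos rfl,
        show 0 + (i:ℕ) - (i:ℕ) = 0 from by omega, coeff_C_zero]
    · have hv : (i:ℕ) ≠ (j:ℕ) := fun h => hij (Fin.ext h)
      rw [if_neg hij]
      by_cases hji : (j:ℕ) ≤ (i:ℕ)
      · rw [if_pos (by omega), coeff_C, if_neg (by omega)]
      · rw [if_neg (by omega)]
  rw [key, Matrix.det_diagonal, Finset.prod_const, Finset.card_univ, Fintype.card_fin,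
    Nat.add_zero]

lemma resultant_C_mul (c : F) (hc : c ≠ 0) (p q : F[X]) :
    _root_.resultant (C c * p) q = c ^ q.natDegree * _root_.resultant p q := by
  rw [resultant_def' (C c * p) q p.natDegree q.natDegree (natDegree_C_mul hc) rfl,
    resultant_def' p q p.natDegree q.natDegree rfl rfl]
  have key : (Matrix.of fun i j : Fin (q.natDegree + p.natDegree) =>
      if (i : ℕ) < q.natDegree then
        if (j : ℕ) ≤ p.natDegree + i then (C c * p).coeff (p.natDegree + i - j) else 0
      else
        if (j : ℕ) ≤ (i : ℕ) then q.coeff ((i : ℕ) - j) else 0)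
      = Matrix.of (fun i j : Fin (q.natDegree + p.natDegree) =>
        (if (i : ℕ) < q.natDegree then c else 1) *
          (Matrix.of fun i j : Fin (q.natDegree + p.natDegree) =>
            if (i : ℕ) < q.natDegree then
              if (j : ℕ) ≤ p.natDegree + i then p.coeff (p.natDegree + i - j) else 0
            else
              if (j : ℕ) ≤ (i : ℕ) then q.coeff ((i : ℕ) - j) else 0) i j) := by
    ext i j
    by_cases hi : (i : ℕ) < q.natDegree
    · simp only [Matrix.of_apply, if_pos hi, coeff_C_mul, mul_ite, mul_zero]
    · simp only [Matrix.of_apply, if_neg hi, one_mul]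
  rw [key, Matrix.det_mul_column]
  congr 1
  rw [Fin.prod_univ_eq_prod_range (fun i => if i < q.natDegree then c else 1)
    (q.natDegree + p.natDegree), Finset.prod_ite]
  have h1 : (Finset.range (q.natDegree + p.natDegree)).filter (fun x => x < q.natDegree)
      = Finset.range q.natDegree := by
    ext x; simp only [Finset.mem_filter, Finset.mem_range]; omega
  rw [h1, Finset.prod_const, Finset.prod_const, Finset.card_range, one_pow, mul_one]

lemma det_sylvester_step (α : F) (p q : F[X]) (n m : ℕ)
    (hn : p.natDegree ≤ n) (hm : q.natDegree ≤ m) :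
    (Matrix.of fun i j : Fin (m + (n+1)) =>
      if (i : ℕ) < m then
        if (j : ℕ) ≤ n+1 + i then ((X - C α) * p).coeff (n+1 + i - j) else 0
      else
        if (j : ℕ) ≤ (i : ℕ) then q.coeff ((i : ℕ) - j) else 0).det
    = q.eval α * (Matrix.of fun i j : Fin (m + n) =>
      if (i : ℕ) < m then
        if (j : ℕ) ≤ n + i then p.coeff (n + i - j) else 0
      else
        if (j : ℕ) ≤ (i : ℕ) then q.coeff ((i : ℕ) - j) else 0).det := by
  set S := Matrix.of fun i j : Fin (m + (n+1)) =>
      if (i : ℕ) < m then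
        if (j : ℕ) ≤ n+1 + i then ((X - C α) * p).coeff (n+1 + i - j) else 0
      else
        if (j : ℕ) ≤ (i : ℕ) then q.coeff ((i : ℕ) - j) else 0 with hS
  set T := Matrix.of fun i j : Fin (m + n) =>
      if (i : ℕ) < m then
        if (j : ℕ) ≤ n + i then p.coeff (n + i - j) else 0
      else
        if (j : ℕ) ≤ (i : ℕ) then q.coeff ((i : ℕ) - j) else 0 with hT
  set U := Matrix.of (fun l j : Fin (m + (n+1)) =>
      if (l : ℕ) ≤ (j : ℕ) then α ^ ((j : ℕ) - (l : ℕ)) else 0) with hU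
  set M := Matrix.of (fun i j : Fin (m + (n+1)) =>
      if (i : ℕ) < m then
        (if (j : ℕ) ≤ n + (i : ℕ) then p.coeff (n + (i : ℕ) - (j : ℕ)) else 0)
      else if (j : ℕ) < (i : ℕ) then
        (∑ l ∈ Finset.range ((j : ℕ)+1),
          (if l ≤ (i : ℕ) then q.coeff ((i : ℕ) - l) else 0) * α ^ ((j : ℕ) - l))
      else α ^ ((j : ℕ) - (i : ℕ)) * q.eval α) with hM
  set V := Matrix.of (fun i i' : Fin (m + (n+1)) =>
      if i' = i then (1 : F)
      else if (m ≤ (i : ℕ) ∧ (i' : ℕ) = (i : ℕ) + 1) then -α else 0) with hV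
  set Nx := Matrix.of (fun i j : Fin (m + (n+1)) =>
      if (i : ℕ) < m then
        (if (j : ℕ) ≤ n + (i : ℕ) then p.coeff (n + (i : ℕ) - (j : ℕ)) else 0)
      else if (i : ℕ) < m + n then
        (if (j : ℕ) ≤ (i : ℕ) then q.coeff ((i : ℕ) - (j : ℕ)) else 0)
      else (if (j : ℕ) < m + n then
        (∑ l ∈ Finset.range ((j : ℕ)+1),
          (if l ≤ (i : ℕ) then q.coeff ((i : ℕ) - l) else 0) * α ^ ((j : ℕ) - l))
        else q.eval α)) with hNx
  have hdetU : U.det = 1 := by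
    rw [Matrix.det_of_upperTriangular
      (show U.BlockTriangular id from fun i j hij => by
        have h2 : (j : ℕ) < (i : ℕ) := hij
        simp only [hU, Matrix.of_apply]
        exact if_neg (by omega))]
    refine Finset.prod_eq_one fun i _ => by
      simp only [hU, Matrix.of_apply, if_pos (le_refl (i : ℕ)), Nat.sub_self, pow_zero]
  have hdetV : V.det = 1 := by
    rw [Matrix.det_of_upperTriangular
      (show V.BlockTriangular id from fun i j hij => by
        have h2 : (j : ℕ) < (i : ℕ) := hij
        simp only [hV, Matrix.of_apply]
        rw [if_neg (show ¬ (j = i) from fun h => by rw [h] at h2; omega),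
          if_neg (by rintro ⟨-, h3⟩; omega)])]
    refine Finset.prod_eq_one fun i _ => by simp [hV]
  have hSU : S * U = M := by
    ext i j
    rw [Matrix.mul_apply]
    by_cases hi : (i : ℕ) < m
    · have step : ∑ l, S i l * U l j
          = ∑ l ∈ Finset.range ((j : ℕ)+1),
            (if l ≤ n+1 + (i : ℕ) then ((X - C α) * p).coeff (n+1 + (i : ℕ) - l) else 0)
              * α ^ ((j : ℕ) - l) := by
        refine (Finset.sum_congr rfl (fun l _ => ?_)).trans
          (fin_sum_to_range (m + (n+1))
            (fun l => if l ≤ n+1 + (i : ℕ) then ((X - C α) * p).coeff (n+1 + (i : ℕ) - l) else 0)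
            (fun l => α ^ ((j : ℕ) - l)) (j : ℕ) j.isLt)
        simp only [hS, hU, Matrix.of_apply, if_pos hi]
      rw [step]
      simp only [hM, Matrix.of_apply, if_pos hi]
      exact aux_p α p n (i : ℕ) (j : ℕ) hn
    · have step : ∑ l, S i l * U l j
          = ∑ l ∈ Finset.range ((j : ℕ)+1),
            (if l ≤ (i : ℕ) then q.coeff ((i : ℕ) - l) else 0) * α ^ ((j : ℕ) - l) := by
        refine (Finset.sum_congr rfl (fun l _ => ?_)).trans
          (fin_sum_to_range (m + (n+1))
            (fun l => if l ≤ (i : ℕ) then q.coeff ((i : ℕ) - l) else 0)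
            (fun l => α ^ ((j : ℕ) - l)) (j : ℕ) j.isLt)
        simp only [hS, hU, Matrix.of_apply, if_neg hi]
      rw [step]
      by_cases hj : (j : ℕ) < (i : ℕ)
      · simp only [hM, Matrix.of_apply, if_neg hi, if_pos hj]
      · simp only [hM, Matrix.of_apply, if_neg hi, if_neg hj]
        exact aux_q_eval α q (i : ℕ) (j : ℕ) (hm.trans (not_lt.mp hi)) (not_lt.mp hj)
  have hVM : V * M = Nx := by
    ext i j
    rw [Matrix.mul_apply]
    by_cases hi : (i : ℕ) < m
    · have hrow : ∀ i', V i i' * M i' j = if i' = i then M i' j else 0 := fun i' => by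
        simp only [hV, Matrix.of_apply]
        by_cases h : i' = i
        · rw [if_pos h, if_pos h, one_mul]
        · rw [if_neg h, if_neg h, if_neg (fun hc => absurd hc.1 (by omega)), zero_mul]
      rw [Finset.sum_congr rfl (fun i' _ => hrow i'),
        Finset.sum_ite_eq' Finset.univ i (fun i' => M i' j), if_pos (Finset.mem_univ i)]
      simp only [hM, hNx, Matrix.of_apply, if_pos hi]
    · by_cases hiN : (i : ℕ) < m + n
      · have him : m ≤ (i : ℕ) := not_lt.mp hi
        have hlt : (i : ℕ) + 1 < m + (n + 1) := by omega
        set ip : Fin (m + (n+1)) := ⟨(i : ℕ) + 1, hlt⟩ with hip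
        have hipv : (ip : ℕ) = (i : ℕ) + 1 := rfl
        have hiip : i ≠ ip := fun hc => by
          have h6 : (i : ℕ) = (ip : ℕ) := congrArg Fin.val hc
          rw [hipv] at h6; omega
        have hrow : ∀ i', V i i' * M i' j
            = (if i' = i then M i' j else 0) + (if i' = ip then -α * M i' j else 0) := by
          intro i'
          simp only [hV, Matrix.of_apply]
          by_cases h : i' = i
          · rw [if_pos h, if_pos h, one_mul,
              if_neg (show i' ≠ ip from fun hc => hiip (h.symm.trans hc)), add_zero]
          · rw [if_neg h, if_neg h]
            by_cases h2 : i' = ip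
            · rw [if_pos (show m ≤ (i:ℕ) ∧ (i' : ℕ) = (i:ℕ)+1 from
                  ⟨him, by rw [h2, hipv]⟩), if_pos h2, zero_add]
            · rw [if_neg (fun hc => h2 (Fin.ext (by rw [hc.2, hipv]))),
                if_neg h2, zero_mul, add_zero]
        rw [Finset.sum_congr rfl (fun i' _ => hrow i'), Finset.sum_add_distrib,
          Finset.sum_ite_eq' Finset.univ i (fun i' => M i' j),
          Finset.sum_ite_eq' Finset.univ ip (fun i' => -α * M i' j),
          if_pos (Finset.mem_univ i), if_pos (Finset.mem_univ ip)]
        have hipm : ¬ ((ip : ℕ) < m) := by omega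
        rcases lt_trichotomy ((j : ℕ)) ((i : ℕ)) with hj | hj | hj
        · have e1 : M i j = ∑ l ∈ Finset.range ((j : ℕ)+1),
              (if l ≤ (i : ℕ) then q.coeff ((i : ℕ) - l) else 0) * α ^ ((j : ℕ) - l) := by
            simp only [hM, Matrix.of_apply, if_neg hi, if_pos hj]
          have e2 : M ip j = ∑ l ∈ Finset.range ((j : ℕ)+1),
              (if l ≤ (i : ℕ)+1 then q.coeff ((i : ℕ)+1 - l) else 0) * α ^ ((j : ℕ) - l) := by
            simp only [hM, Matrix.of_apply, hipv, if_neg hipm,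
              if_neg (show ¬ ((i : ℕ)+1 < m) by omega),
              if_pos (show (j : ℕ) < (i : ℕ)+1 by omega)]
          have h3 := aux_q_rec α q (i : ℕ) (j : ℕ) (hm.trans him) (by omega)
          rw [e1, e2]
          simp only [hNx, Matrix.of_apply, if_neg hi, if_pos hiN,
            if_pos (show (j : ℕ) ≤ (i : ℕ) by omega)]
          linear_combination h3
        · have e1 : M i j = q.eval α := by
            simp only [hM, Matrix.of_apply, if_neg hi, if_neg (show ¬ ((j:ℕ) < (i:ℕ)) by omega)]
            rw [show ((j:ℕ) - (i:ℕ)) = 0 from by omega, pow_zero, one_mul]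
          have e2 : M ip j = ∑ l ∈ Finset.range ((j : ℕ)+1),
              (if l ≤ (i : ℕ)+1 then q.coeff ((i : ℕ)+1 - l) else 0) * α ^ ((j : ℕ) - l) := by
            simp only [hM, Matrix.of_apply, hipv, if_neg hipm,
              if_neg (show ¬ ((i : ℕ)+1 < m) by omega),
              if_pos (show (j : ℕ) < (i : ℕ)+1 by omega)]
          have h4 := aux_q_eval α q (i : ℕ) (j : ℕ) (hm.trans him) (by omega)
          have h3 := aux_q_rec α q (i : ℕ) (j : ℕ) (hm.trans him) (by omega)
          rw [show ((j:ℕ) - (i:ℕ)) = 0 from by omega, pow_zero, one_mul] at h4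
          simp only [hNx, Matrix.of_apply, if_neg hi, if_pos hiN,
            if_pos (show (j:ℕ) ≤ (i:ℕ) by omega)]
          rw [e1, e2]
          linear_combination h3 - h4
        · have e1 : M i j = α ^ ((j : ℕ) - (i : ℕ)) * q.eval α := by
            simp only [hM, Matrix.of_apply, if_neg hi, if_neg (show ¬ ((j:ℕ) < (i:ℕ)) by omega)]
          have e2 : M ip j = α ^ ((j : ℕ) - ((i : ℕ)+1)) * q.eval α := by
            simp only [hM, Matrix.of_apply, hipv, if_neg hipm,
              if_neg (show ¬ ((i : ℕ)+1 < m) by omega),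
              if_neg (show ¬ ((j : ℕ) < (i : ℕ)+1) by omega)]
          rw [e1, e2]
          simp only [hNx, Matrix.of_apply, if_neg hi, if_pos hiN,
            if_neg (show ¬ ((j : ℕ) ≤ (i : ℕ)) by omega)]
          rw [show ((j:ℕ) - (i:ℕ)) = ((j:ℕ) - ((i:ℕ)+1)) + 1 from by omega, pow_succ]
          ring
      · have him : m ≤ (i : ℕ) := not_lt.mp hi
        have hival : (i : ℕ) = m + n := by have := i.isLt; omega
        have hrow : ∀ i', V i i' * M i' j = if i' = i then M i' j else 0 := fun i' => by
          simp only [hV, Matrix.of_apply]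
          by_cases h : i' = i
          · rw [if_pos h, if_pos h, one_mul]
          · rw [if_neg h, if_neg h,
              if_neg (by rintro ⟨-, h2⟩; have := i'.isLt; omega), zero_mul]
        rw [Finset.sum_congr rfl (fun i' _ => hrow i'),
          Finset.sum_ite_eq' Finset.univ i (fun i' => M i' j), if_pos (Finset.mem_univ i)]
        by_cases hj : (j : ℕ) < m + n
        · simp only [hM, hNx, Matrix.of_apply, if_neg hi, if_neg hiN,
            if_pos (show (j : ℕ) < (i : ℕ) by omega), if_pos hj]
        · have hjval : (j : ℕ) = m + n := by have := j.isLt; omega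
          simp only [hM, hNx, Matrix.of_apply, if_neg hi, if_neg hiN,
            if_neg (show ¬ ((j : ℕ) < (i : ℕ)) by omega), if_neg hj]
          rw [show ((j:ℕ) - (i:ℕ)) = 0 from by omega, pow_zero, one_mul]
  have hminor : Nx.submatrix Fin.castSucc Fin.castSucc = T := by
    ext i j
    simp only [Matrix.submatrix_apply, hNx, hT, Matrix.of_apply, Fin.coe_castSucc]
    by_cases hi : (i : ℕ) < m
    · rw [if_pos hi, if_pos hi]
    · rw [if_neg hi, if_neg hi, if_pos (show (i:ℕ) < m + n from i.isLt)]
  have hlast : ∀ i : Fin (m + (n+1)), i ≠ Fin.last (m+n) → Nx i (Fin.last (m+n)) = 0 := by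
    intro i hi
    have hiv : (i : ℕ) < m + n := Fin.val_lt_last hi
    simp only [hNx, Matrix.of_apply, Fin.val_last]
    by_cases h1 : (i : ℕ) < m
    · rw [if_pos h1, if_neg (show ¬ (m + n ≤ n + (i:ℕ)) by omega)]
    · rw [if_neg h1, if_pos hiv, if_neg (show ¬ (m + n ≤ (i:ℕ)) by omega)]
  have hNlast : Nx (Fin.last (m+n)) (Fin.last (m+n)) = q.eval α := by
    simp only [hNx, Matrix.of_apply, Fin.val_last]
    rw [if_neg (show ¬ (m + n < m) by omega), if_neg (show ¬ (m + n < m + n) by omega),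
      if_neg (show ¬ (m + n < m + n) by omega)]
  calc S.det = S.det * U.det := by rw [hdetU, mul_one]
    _ = M.det := by rw [← Matrix.det_mul, hSU]
    _ = V.det * M.det := by rw [hdetV, one_mul]
    _ = Nx.det := by rw [← Matrix.det_mul, hVM]
    _ = q.eval α * T.det := by
        have key := Matrix.det_succ_column (n := m+n) Nx (Fin.last (m+n))
        refine key.trans ?_
        rw [Finset.sum_eq_single (Fin.last (m+n))
            (fun i _ hine => by rw [hlast i hine, mul_zero, zero_mul])
            (fun h => absurd (Finset.mem_univ _) h),
          hNlast, Fin.succAbove_last, hminor, Fin.val_last,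
          show ((-1 : F) ^ ((m+n) + (m+n))) = 1 from Even.neg_one_pow ⟨m+n, rfl⟩, one_mul]

lemma resultant_X_sub_C_mul (α : F) (p q : F[X]) (hp : p ≠ 0) :
    _root_.resultant ((X - C α) * p) q = q.eval α * _root_.resultant p q := by
  have hP : ((X - C α) * p).natDegree = p.natDegree + 1 := by
    rw [natDegree_mul (X_sub_C_ne_zero α) hp, natDegree_X_sub_C]; omega
  rw [resultant_def' ((X - C α) * p) q (p.natDegree + 1) q.natDegree hP rfl,
    resultant_def' p q p.natDegree q.natDegree rfl rfl]
  exact det_sylvester_step α p q p.natDegree q.natDegree le_rfl le_rfl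

lemma resultant_prod (c : F) (hc : c ≠ 0) (s : Multiset F) (q : F[X]) :
    _root_.resultant (C c * (s.map (fun a => X - C a)).prod) q
      = c ^ q.natDegree * (s.map (fun a => q.eval a)).prod := by
  induction s using Multiset.induction_on with
  | empty =>
    simp only [Multiset.map_zero, Multiset.prod_zero, mul_one]
    exact resultant_C c q
  | cons a s ih =>
    have hmonic : ((s.map fun a => X - C a).prod).Monic :=
      monic_multiset_prod_of_monic _ _ (fun b _ => monic_X_sub_C b)
    have hne : C c * (s.map fun a => X - C a).prod ≠ 0 :=
      mul_ne_zero (by simpa using hc) hmonic.ne_zero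
    have e : C c * ((a ::ₘ s).map fun a => X - C a).prod
        = (X - C a) * (C c * (s.map fun a => X - C a).prod) := by
      rw [Multiset.map_cons, Multiset.prod_cons]; ring
    rw [e, resultant_X_sub_C_mul a _ q hne, ih, Multiset.map_cons, Multiset.prod_cons]
    ring

end FieldRes

section Helpers
private lemma sub_C_info {A : Type*} [CommRing A] [Nontrivial A] (p : Polynomial A) (a : A)
    (hp : 0 < p.natDegree) :
    (p - Polynomial.C a).natDegree = p.natDegree ∧
      (p - Polynomial.C a).leadingCoeff = p.leadingCoeff := by
  have h1 : (p - Polynomial.C a).natDegree = p.natDegree :=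
    natDegree_sub_eq_left_of_natDegree_lt (by rw [natDegree_C]; exact hp)
  refine ⟨h1, ?_⟩
  rw [Polynomial.leadingCoeff, Polynomial.leadingCoeff, h1, coeff_sub, coeff_C,
    if_neg (by omega), sub_zero]

private lemma leadingCoeff_map_inj {R S : Type*} [Semiring R] [Semiring S] (φ : R →+* S)
    (hφ : Function.Injective φ) (p : Polynomial R) :
    (p.map φ).leadingCoeff = φ p.leadingCoeff := by
  rw [Polynomial.leadingCoeff, Polynomial.leadingCoeff, natDegree_map_eq_of_injective hφ,
    coeff_map]
end Helpers


/-- For `f ∈ K[x]` and an auxiliary variable `t`, the polynomial `f(X) − t`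
regarded as a polynomial in `X` with coefficients in `K[t]`. -/
noncomputable def polySubT {K : Type*} [Field K] (f : Polynomial K) :
    Polynomial (Polynomial K) :=
  f.map Polynomial.C - Polynomial.C Polynomial.X

set_option maxHeartbeats 1600000 in
/-- Let `K` be a field and `f = g ∘ h` with `g` nonconstant,
`deg h = k ≥ 2`, and `f' ≠ 0`.  Let `D(t) = Res_X(f(X) − t, f'(X)) ∈ K[t]`.  Then there
are `A, B ∈ K[t]` with `D = A^k · B` and `deg B ≤ k − 1`; moreover, if `char K = 0`,
then `deg B = k − 1`. -/
theorem stmt_11 {K : Type*} [Field K] (f g h : Polynomial K) (k : ℕ)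
    (hfgh : f = g.comp h) (hg : 0 < g.natDegree) (hk : h.natDegree = k) (hk2 : 2 ≤ k)
    (hf' : derivative f ≠ 0) :
    ∃ A B : Polynomial K,
      _root_.resultant (polySubT f) ((derivative f).map Polynomial.C) = A ^ k * B ∧
      B.natDegree ≤ k - 1 ∧ (CharZero K → B.natDegree = k - 1) := by
  classical
  set D := _root_.resultant (polySubT f) ((derivative f).map Polynomial.C) with hDdef
  by_cases hD0 : D = 0
  · refine ⟨0, Polynomial.X ^ (k-1), ?_, ?_, ?_⟩
    · rw [hD0, zero_pow (show k ≠ 0 by omega), zero_mul]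
    · rw [natDegree_X_pow]
    · intro _; rw [natDegree_X_pow]
  -- basic nonvanishing facts
  have hk0 : 0 < k := by omega
  have hh0 : h ≠ 0 := fun h0 => by rw [h0, natDegree_zero] at hk; omega
  have hg0 : g ≠ 0 := fun h0 => by
    rw [h0, natDegree_zero] at hg; exact absurd hg (lt_irrefl 0)
  have hfd : derivative f = (derivative g).comp h * derivative h := by
    rw [hfgh, derivative_comp]; ring
  have hu0 : (derivative g).comp h ≠ 0 := fun h0 => hf' (by rw [hfd, h0, zero_mul])
  have hv0 : derivative h ≠ 0 := fun h0 => hf' (by rw [hfd, h0, mul_zero])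
  have hgd0 : derivative g ≠ 0 := fun h0 => hu0 (by rw [h0, zero_comp])
  have hnf : f.natDegree = g.natDegree * k := by rw [hfgh, natDegree_comp, hk]
  have hnfpos : 0 < f.natDegree := by rw [hnf]; exact Nat.mul_pos hg hk0
  have hf0 : f ≠ 0 := fun h0 => by
    rw [h0, natDegree_zero] at hnfpos; exact absurd hnfpos (lt_irrefl 0)
  have hlcg : g.leadingCoeff ≠ 0 := leadingCoeff_ne_zero.mpr hg0
  have hlch : h.leadingCoeff ≠ 0 := leadingCoeff_ne_zero.mpr hh0
  -- the tower of fields and ring maps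
  set ι₀ : K →+* AlgebraicClosure K := algebraMap K (AlgebraicClosure K) with hι₀def
  have hι₀inj : Function.Injective ι₀ := (algebraMap K (AlgebraicClosure K)).injective
  set ψ : Polynomial (AlgebraicClosure K) →+*
      AlgebraicClosure (FractionRing (Polynomial (AlgebraicClosure K))) :=
    (algebraMap (FractionRing (Polynomial (AlgebraicClosure K)))
      (AlgebraicClosure (FractionRing (Polynomial (AlgebraicClosure K))))).comp
      (algebraMap (Polynomial (AlgebraicClosure K))
        (FractionRing (Polynomial (AlgebraicClosure K)))) with hψdef
  have hψinj : Function.Injective ψ := fun a b hab => by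
    apply IsFractionRing.injective (Polynomial (AlgebraicClosure K))
      (FractionRing (Polynomial (AlgebraicClosure K)))
    exact (algebraMap (FractionRing (Polynomial (AlgebraicClosure K)))
      (AlgebraicClosure (FractionRing (Polynomial (AlgebraicClosure K))))).injective hab
  set χ := ψ.comp (Polynomial.mapRingHom ι₀) with hχdef
  have hχinj : Function.Injective χ := hψinj.comp (Polynomial.map_injective ι₀ hι₀inj)
  set ξ := χ.comp (Polynomial.C :
    K →+* Polynomial K) with hξdef
  have hξinj : Function.Injective ξ := hχinj.comp Polynomial.C_injective
  set ω := ψ.comp (Polynomial.C : AlgebraicClosure K →+*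
    Polynomial (AlgebraicClosure K)) with hωdef
  have hωinj : Function.Injective ω := hψinj.comp Polynomial.C_injective
  set τ := ψ Polynomial.X with hτdef
  have hχψ : ∀ x : Polynomial K, χ x = ψ (x.map ι₀) := fun _ => rfl
  have hωψ : ∀ x : AlgebraicClosure K, ω x = ψ (Polynomial.C x) := fun _ => rfl
  have hξC : ∀ x : K, ξ x = ω (ι₀ x) := fun x => by
    show χ (Polynomial.C x) = ψ (Polynomial.C (ι₀ x))
    rw [hχψ, Polynomial.map_C]
  have hξω : ξ = ω.comp ι₀ := RingHom.ext fun x => hξC x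
  have hχX : χ Polynomial.X = τ := by
    rw [hχψ, Polynomial.map_X]
  have hξne : ∀ x : K, x ≠ 0 → ξ x ≠ 0 := fun x hx h0 =>
    hx (hξinj (by rw [h0, map_zero]))
  -- degrees of mapped polynomials
  have hmapf : (f.map ξ).natDegree = f.natDegree := natDegree_map_eq_of_injective hξinj f
  have hmapg : (g.map ξ).natDegree = g.natDegree := natDegree_map_eq_of_injective hξinj g
  have hmaph : (h.map ξ).natDegree = h.natDegree := natDegree_map_eq_of_injective hξinj h
  have hmQ : ((derivative f).map ξ).natDegree = (derivative f).natDegree :=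
    natDegree_map_eq_of_injective hξinj _
  have hmQg : ((derivative g).map ξ).natDegree = (derivative g).natDegree :=
    natDegree_map_eq_of_injective hξinj _
  have hrv : ((derivative h).map ξ).natDegree = (derivative h).natDegree :=
    natDegree_map_eq_of_injective hξinj _
  -- polySubT facts
  have hfC : (f.map (Polynomial.C : K →+* Polynomial K)).natDegree = f.natDegree :=
    natDegree_map_eq_of_injective Polynomial.C_injective f
  have hgC : (g.map (Polynomial.C : K →+* Polynomial K)).natDegree = g.natDegree :=
    natDegree_map_eq_of_injective Polynomial.C_injective g
  have hPSfdeg : (polySubT f).natDegree = f.natDegree := by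
    rw [show polySubT f = f.map Polynomial.C - Polynomial.C Polynomial.X from rfl,
      (sub_C_info (f.map Polynomial.C) Polynomial.X (by rw [hfC]; exact hnfpos)).1, hfC]
  have hPSgdeg : (polySubT g).natDegree = g.natDegree := by
    rw [show polySubT g = g.map Polynomial.C - Polynomial.C Polynomial.X from rfl,
      (sub_C_info (g.map Polynomial.C) Polynomial.X (by rw [hgC]; exact hg)).1, hgC]
  have hPfχ : (polySubT f).map χ = f.map ξ - Polynomial.C τ := by
    rw [show polySubT f = f.map Polynomial.C - Polynomial.C Polynomial.X from rfl,
      Polynomial.map_sub, Polynomial.map_map, Polynomial.map_C, hχX, ← hξdef]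
  have hPdeg : (f.map ξ - Polynomial.C τ).natDegree = f.natDegree := by
    rw [(sub_C_info (f.map ξ) τ (by rw [hmapf]; exact hnfpos)).1, hmapf]
  -- G and its roots
  set Gg := g.map ξ - Polynomial.C τ with hGgdef
  have hPgχ : (polySubT g).map χ = Gg := by
    rw [show polySubT g = g.map Polynomial.C - Polynomial.C Polynomial.X from rfl,
      Polynomial.map_sub, Polynomial.map_map, Polynomial.map_C, hχX, ← hξdef, ← hGgdef]
  have hGdeg : Gg.natDegree = g.natDegree := by
    rw [hGgdef, (sub_C_info (g.map ξ) τ (by rw [hmapg]; exact hg)).1, hmapg]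
  have hGglead : Gg.leadingCoeff = ξ g.leadingCoeff := by
    rw [hGgdef, (sub_C_info (g.map ξ) τ (by rw [hmapg]; exact hg)).2,
      leadingCoeff_map_inj ξ hξinj]
  have hGsplits : Gg.Splits := IsAlgClosed.splits Gg
  have hGfact2 : Gg = Polynomial.C (ξ g.leadingCoeff)
      * (Gg.roots.map (fun a => Polynomial.X - Polynomial.C a)).prod := by
    conv_lhs => rw [hGsplits.eq_prod_roots]
    rw [hGglead]
  have hGcard : Multiset.card Gg.roots = g.natDegree := by
    rw [splits_iff_card_roots.mp hGsplits, hGdeg]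
  -- the fibers W_β
  have hWdeg : ∀ β, (h.map ξ - Polynomial.C β).natDegree = k := fun β => by
    rw [(sub_C_info (h.map ξ) β (by rw [hmaph, hk]; omega)).1, hmaph, hk]
  have hW0 : ∀ β, (h.map ξ - Polynomial.C β) ≠ 0 := fun β h0 => by
    have := hWdeg β; rw [h0, natDegree_zero] at this; omega
  have hWlead : ∀ β, (h.map ξ - Polynomial.C β).leadingCoeff = ξ h.leadingCoeff := fun β => by
    rw [(sub_C_info (h.map ξ) β (by rw [hmaph, hk]; omega)).2, leadingCoeff_map_inj ξ hξinj]
  have hWsplits : ∀ β, (h.map ξ - Polynomial.C β).Splits := fun β =>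
    IsAlgClosed.splits _
  have hWcard : ∀ β, Multiset.card (h.map ξ - Polynomial.C β).roots = k := fun β => by
    rw [splits_iff_card_roots.mp (hWsplits β), hWdeg β]
  have hWfact : ∀ β, (h.map ξ - Polynomial.C β) = Polynomial.C (ξ h.leadingCoeff)
      * ((h.map ξ - Polynomial.C β).roots.map (fun a => Polynomial.X - Polynomial.C a)).prod :=
    fun β => by
      conv_lhs => rw [(hWsplits β).eq_prod_roots]
      rw [hWlead β]
  set S := Gg.roots.bind (fun β => (h.map ξ - Polynomial.C β).roots) with hSdef
  -- factor P-bar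
  have hc : ξ g.leadingCoeff * ξ h.leadingCoeff ^ g.natDegree ≠ 0 :=
    mul_ne_zero (hξne _ hlcg) (pow_ne_zero _ (hξne _ hlch))
  have hPfact : f.map ξ - Polynomial.C τ
      = Polynomial.C (ξ g.leadingCoeff * ξ h.leadingCoeff ^ g.natDegree)
        * (S.map (fun a => Polynomial.X - Polynomial.C a)).prod := by
    have hcomp : f.map ξ - Polynomial.C τ = Gg.comp (h.map ξ) := by
      rw [hfgh, Polynomial.map_comp, hGgdef, Polynomial.sub_comp, Polynomial.C_comp]
    rw [hcomp]
    conv_lhs => rw [hGfact2]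
    rw [Polynomial.mul_comp, Polynomial.C_comp, Polynomial.multiset_prod_comp,
      Multiset.map_map]
    rw [Multiset.map_congr rfl (show ∀ β ∈ Gg.roots,
        ((fun p : Polynomial _ => p.comp (h.map ξ)) ∘
          (fun a => Polynomial.X - Polynomial.C a)) β = h.map ξ - Polynomial.C β from
      fun β _ => by simp [Polynomial.sub_comp])]
    rw [Multiset.map_congr rfl (fun β _ => hWfact β), Multiset.prod_map_mul,
      Multiset.map_const', Multiset.prod_replicate, hGcard]
    rw [show (Gg.roots.map (fun β =>
        (((h.map ξ - Polynomial.C β).roots).map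
          (fun a => Polynomial.X - Polynomial.C a)).prod)).prod
      = ((Gg.roots.bind (fun β => (h.map ξ - Polynomial.C β).roots)).map
          (fun a => Polynomial.X - Polynomial.C a)).prod from by
        rw [Multiset.map_bind, Multiset.prod_bind]]
    rw [← hSdef, Polynomial.C_mul, Polynomial.C_pow]
    ring
  -- resultant computations over Omega
  have hdeg1 : ((polySubT f).map χ).natDegree = (polySubT f).natDegree := by
    rw [hPfχ, hPdeg, hPSfdeg]
  have hQχ : ((derivative f).map Polynomial.C).map χ = (derivative f).map ξ := by
    rw [Polynomial.map_map, ← hξdef]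
  have hCdf : ((derivative f).map (Polynomial.C : K →+* Polynomial K)).natDegree
      = (derivative f).natDegree := natDegree_map_eq_of_injective Polynomial.C_injective _
  have hdeg2 : (((derivative f).map Polynomial.C).map χ).natDegree
      = ((derivative f).map Polynomial.C).natDegree := by rw [hQχ, hmQ, hCdf]
  set cb : AlgebraicClosure K := ι₀ g.leadingCoeff * ι₀ h.leadingCoeff ^ g.natDegree
    with hcbdef
  have hc' : ξ g.leadingCoeff * ξ h.leadingCoeff ^ g.natDegree = ω cb := by
    rw [hcbdef, map_mul, map_pow, hξC, hξC]
  have hres1 : χ D = ω cb ^ (derivative f).natDegree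
      * (S.map (fun a => ((derivative f).map ξ).eval a)).prod := by
    rw [hDdef, ← resultant_map χ (polySubT f) ((derivative f).map Polynomial.C) hdeg1 hdeg2,
      hPfχ, hQχ]
    conv_lhs => rw [hPfact]
    rw [resultant_prod _ hc S ((derivative f).map ξ), hmQ, hc']
  have hA0deg1 : ((polySubT g).map χ).natDegree = (polySubT g).natDegree := by
    rw [hPgχ, hGdeg, hPSgdeg]
  have hQgχ : ((derivative g).map Polynomial.C).map χ = (derivative g).map ξ := by
    rw [Polynomial.map_map, ← hξdef]
  have hCdg : ((derivative g).map (Polynomial.C : K →+* Polynomial K)).natDegree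
      = (derivative g).natDegree := natDegree_map_eq_of_injective Polynomial.C_injective _
  have hA0deg2 : (((derivative g).map Polynomial.C).map χ).natDegree
      = ((derivative g).map Polynomial.C).natDegree := by rw [hQgχ, hmQg, hCdg]
  set A₀ := _root_.resultant (polySubT g) ((derivative g).map Polynomial.C) with hA₀def
  have hA0 : χ A₀ = ξ g.leadingCoeff ^ (derivative g).natDegree
      * (Gg.roots.map (fun β => ((derivative g).map ξ).eval β)).prod := by
    rw [hA₀def, ← resultant_map χ _ _ hA0deg1 hA0deg2, hPgχ, hQgχ]
    conv_lhs => rw [hGfact2]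
    rw [resultant_prod _ (hξne _ hlcg) _ _, hmQg]
  -- split the eval product
  have hQsplit : (derivative f).map ξ
      = ((derivative g).comp h).map ξ * (derivative h).map ξ := by
    rw [hfd, Polynomial.map_mul]
  have hsplit : (S.map (fun a => ((derivative f).map ξ).eval a)).prod
      = (S.map (fun a => (((derivative g).comp h).map ξ).eval a)).prod
        * (S.map (fun a => ((derivative h).map ξ).eval a)).prod := by
    rw [← Multiset.prod_map_mul]
    exact congrArg Multiset.prod (Multiset.map_congr rfl
      (fun a _ => by rw [hQsplit, eval_mul]))
  have hueval : ∀ β ∈ Gg.roots, ∀ a ∈ (h.map ξ - Polynomial.C β).roots,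
      (((derivative g).comp h).map ξ).eval a = ((derivative g).map ξ).eval β := by
    intro β hβ a ha
    have h2 := (Polynomial.mem_roots'.mp ha).2
    have hroot : (h.map ξ).eval a = β := by
      have h3 : (h.map ξ).eval a - β = 0 := by
        simpa [Polynomial.IsRoot, eval_sub, eval_C] using h2
      exact sub_eq_zero.mp h3
    rw [Polynomial.map_comp, eval_comp, hroot]
  have hprodu : (S.map (fun a => (((derivative g).comp h).map ξ).eval a)).prod
      = ((Gg.roots.map (fun β => ((derivative g).map ξ).eval β)).prod) ^ k := by
    rw [hSdef, Multiset.map_bind, Multiset.prod_bind, ← Multiset.prod_map_pow]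
    exact congrArg Multiset.prod (Multiset.map_congr rfl (fun β hβ => by
      rw [Multiset.map_congr rfl (fun a ha => hueval β hβ a ha), Multiset.map_const',
        Multiset.prod_replicate, hWcard β]))
  -- the v side
  set vK := (derivative h).map ι₀ with hvKdef
  have hvK0 : vK ≠ 0 := by
    rw [hvKdef]; exact (Polynomial.map_ne_zero_iff hι₀inj).mpr hv0
  have hvKdeg : vK.natDegree = (derivative h).natDegree := by
    rw [hvKdef]; exact natDegree_map_eq_of_injective hι₀inj _
  have hvKsplits : vK.Splits := IsAlgClosed.splits vK
  have hvKcard : Multiset.card vK.roots = (derivative h).natDegree := by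
    rw [splits_iff_card_roots.mp hvKsplits, hvKdeg]
  have hvKlc : vK.leadingCoeff ≠ 0 := leadingCoeff_ne_zero.mpr hvK0
  have hωlc0 : ω vK.leadingCoeff ≠ 0 := fun h0 => hvKlc (hωinj (by rw [h0, map_zero]))
  have hvξ : (derivative h).map ξ = vK.map ω := by
    rw [hvKdef, Polynomial.map_map, ← hξω]
  have hvfact : (derivative h).map ξ = Polynomial.C (ω vK.leadingCoeff)
      * ((vK.roots.map ω).map (fun a => Polynomial.X - Polynomial.C a)).prod := by
    rw [hvξ]
    conv_lhs => rw [hvKsplits.eq_prod_roots]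
    rw [Polynomial.map_mul, Polynomial.map_C, Polynomial.map_multiset_prod,
      Multiset.map_map, Multiset.map_map]
    congr 1
    exact congrArg Multiset.prod (Multiset.map_congr rfl (fun a _ => by
      simp [Polynomial.map_sub]))
  set ν := (vK.roots.map (fun d =>
    Polynomial.C ((f.map ι₀).eval d) - Polynomial.X)).prod with hνdef
  have hPeval : ∀ d : AlgebraicClosure K, (f.map ξ - Polynomial.C τ).eval (ω d)
      = ψ (Polynomial.C ((f.map ι₀).eval d) - Polynomial.X) := by
    intro d
    rw [eval_sub, eval_C, map_sub ψ, ← hωψ, ← hτdef]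
    congr 1
    rw [show f.map ξ = (f.map ι₀).map ω from by rw [Polynomial.map_map, ← hξω],
      Polynomial.eval_map, Polynomial.eval₂_at_apply]
  have hprodv : ((vK.roots.map ω).map (fun a => (f.map ξ - Polynomial.C τ).eval a)).prod
      = ψ ν := by
    calc ((vK.roots.map ω).map (fun a => (f.map ξ - Polynomial.C τ).eval a)).prod
        = (vK.roots.map (fun d =>
            ψ (Polynomial.C ((f.map ι₀).eval d) - Polynomial.X))).prod := by
          rw [Multiset.map_map]
          exact congrArg Multiset.prod (Multiset.map_congr rfl (fun d _ => hPeval d))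
      _ = ψ ν := by
          rw [hνdef, map_multiset_prod ψ, Multiset.map_map]
          exact congrArg Multiset.prod (Multiset.map_congr rfl (fun d _ => rfl))
  obtain ⟨ε, hε, hswap⟩ := resultant_swap (f.map ξ - Polynomial.C τ) ((derivative h).map ξ)
  have hres2 : _root_.resultant ((derivative h).map ξ) (f.map ξ - Polynomial.C τ)
      = ω vK.leadingCoeff ^ f.natDegree * ψ ν := by
    conv_lhs => rw [hvfact]
    rw [resultant_prod _ hωlc0 _ _, hPdeg, hprodv]
  have hη : ∃ η : AlgebraicClosure K, η ≠ 0 ∧ ω η = ε := by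
    rcases hε with hh | hh
    · exact ⟨1, one_ne_zero, by rw [hh, map_one]⟩
    · exact ⟨-1, neg_ne_zero.mpr one_ne_zero, by rw [hh, map_neg, map_one]⟩
  obtain ⟨η, hη0, hηε⟩ := hη
  have hresPv : _root_.resultant (f.map ξ - Polynomial.C τ) ((derivative h).map ξ)
      = ω cb ^ (derivative h).natDegree
        * (S.map (fun a => ((derivative h).map ξ).eval a)).prod := by
    conv_lhs => rw [hPfact]
    rw [resultant_prod _ hc _ _, hrv, hc']
  have hE3 : ω cb ^ (derivative h).natDegree
        * (S.map (fun a => ((derivative h).map ξ).eval a)).prod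
      = ω η * (ω vK.leadingCoeff ^ f.natDegree * ψ ν) := by
    rw [← hresPv, hswap, hres2, hηε]
  -- grand equation over Omega
  have grand : χ D * ξ g.leadingCoeff ^ ((derivative g).natDegree * k)
        * ω cb ^ (derivative h).natDegree
      = ω cb ^ (derivative f).natDegree * (χ A₀) ^ k
        * (ω η * (ω vK.leadingCoeff ^ f.natDegree * ψ ν)) := by
    rw [hres1, hsplit, hprodu, hA0, ← hE3]
    ring
  -- descend to the algebraic closure coefficients
  have hstar2 : D.map ι₀
        * Polynomial.C (ι₀ g.leadingCoeff) ^ ((derivative g).natDegree * k)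
        * Polynomial.C cb ^ (derivative h).natDegree
      = Polynomial.C cb ^ (derivative f).natDegree * (A₀.map ι₀) ^ k
        * (Polynomial.C η * Polynomial.C vK.leadingCoeff ^ f.natDegree * ν) := by
    apply hψinj
    simp only [map_mul, map_pow]
    simp only [← hχψ, ← hωψ, ← hξC]
    linear_combination grand
  -- nu basics
  have hν0mem : (0 : Polynomial (AlgebraicClosure K)) ∉ vK.roots.map
      (fun d => Polynomial.C ((f.map ι₀).eval d) - Polynomial.X) := by
    intro hmem
    obtain ⟨d, -, hd⟩ := Multiset.mem_map.mp hmem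
    have h2 : Polynomial.X - Polynomial.C ((f.map ι₀).eval d)
        = -(Polynomial.C ((f.map ι₀).eval d) - Polynomial.X) := by ring
    exact X_sub_C_ne_zero _ (by rw [h2, hd, neg_zero])
  have hν0 : ν ≠ 0 := by rw [hνdef]; exact Multiset.prod_ne_zero hν0mem
  have hνdeg : ν.natDegree = (derivative h).natDegree := by
    rw [hνdef, Polynomial.natDegree_multiset_prod _ hν0mem, Multiset.map_map,
      Multiset.map_congr rfl (show ∀ d ∈ vK.roots, (Polynomial.natDegree ∘ (fun d =>
          Polynomial.C ((f.map ι₀).eval d) - Polynomial.X)) d = 1 from fun d _ => by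
        show (Polynomial.C ((f.map ι₀).eval d) - Polynomial.X).natDegree = 1
        rw [show Polynomial.C ((f.map ι₀).eval d) - Polynomial.X
            = -(Polynomial.X - Polynomial.C ((f.map ι₀).eval d)) from by ring,
          natDegree_neg, natDegree_X_sub_C]),
      Multiset.map_const', Multiset.sum_replicate, smul_eq_mul, mul_one, hvKcard]
  -- nonzero constants
  have hι₀g : ι₀ g.leadingCoeff ≠ 0 := fun h0 => hlcg (hι₀inj (by rw [h0, map_zero]))
  have hι₀h : ι₀ h.leadingCoeff ≠ 0 := fun h0 => hlch (hι₀inj (by rw [h0, map_zero]))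
  have hcb0 : cb ≠ 0 := by rw [hcbdef]; exact mul_ne_zero hι₀g (pow_ne_zero _ hι₀h)
  have hD0' : D.map ι₀ ≠ 0 := (Polynomial.map_ne_zero_iff hι₀inj).mpr hD0
  have hA00 : A₀ ≠ 0 := by
    intro h0
    rw [h0, Polynomial.map_zero, zero_pow (show k ≠ 0 by omega), mul_zero, zero_mul] at hstar2
    exact (mul_ne_zero (mul_ne_zero hD0' (pow_ne_zero _ (Polynomial.C_ne_zero.mpr hι₀g)))
      (pow_ne_zero _ (Polynomial.C_ne_zero.mpr hcb0))) hstar2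
  have hA0'0 : A₀.map ι₀ ≠ 0 := (Polynomial.map_ne_zero_iff hι₀inj).mpr hA00
  have hlcA : A₀.leadingCoeff ≠ 0 := leadingCoeff_ne_zero.mpr hA00
  -- the constant w
  have hinvne : ι₀ g.leadingCoeff ^ ((derivative g).natDegree * k)
      * cb ^ (derivative h).natDegree ≠ 0 :=
    mul_ne_zero (pow_ne_zero _ hι₀g) (pow_ne_zero _ hcb0)
  set wq := cb ^ (derivative f).natDegree * η * vK.leadingCoeff ^ f.natDegree
      * (ι₀ g.leadingCoeff ^ ((derivative g).natDegree * k)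
        * cb ^ (derivative h).natDegree)⁻¹ with hwqdef
  have hwq0 : wq ≠ 0 := by
    rw [hwqdef]
    exact mul_ne_zero (mul_ne_zero (mul_ne_zero (pow_ne_zero _ hcb0) hη0)
      (pow_ne_zero _ hvKlc)) (inv_ne_zero hinvne)
  have hwqC : Polynomial.C wq
        * Polynomial.C (ι₀ g.leadingCoeff) ^ ((derivative g).natDegree * k)
        * Polynomial.C cb ^ (derivative h).natDegree
      = Polynomial.C cb ^ (derivative f).natDegree * Polynomial.C η
        * Polynomial.C vK.leadingCoeff ^ f.natDegree := by
    rw [← Polynomial.C_pow, ← Polynomial.C_pow, ← Polynomial.C_pow, ← Polynomial.C_pow,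
      ← Polynomial.C_mul, ← Polynomial.C_mul, ← Polynomial.C_mul, ← Polynomial.C_mul]
    congr 1
    rw [hwqdef]
    field_simp
  have hstar3 : D.map ι₀ = (A₀.map ι₀) ^ k * (Polynomial.C wq * ν) := by
    apply mul_right_cancel₀
      (b := Polynomial.C (ι₀ g.leadingCoeff) ^ ((derivative g).natDegree * k)
        * Polynomial.C cb ^ (derivative h).natDegree)
      (mul_ne_zero (pow_ne_zero _ (Polynomial.C_ne_zero.mpr hι₀g))
        (pow_ne_zero _ (Polynomial.C_ne_zero.mpr hcb0)))
    linear_combination hstar2 - ((A₀.map ι₀) ^ k * ν) * hwqC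
  -- divide at the level of K
  set M₀ := A₀ * Polynomial.C (A₀.leadingCoeff)⁻¹ with hM₀def
  have hM₀ : M₀.Monic := monic_mul_leadingCoeff_inv hA00
  have hccA : (Polynomial.C (ι₀ A₀.leadingCoeff⁻¹) * Polynomial.C (ι₀ A₀.leadingCoeff)
      : Polynomial (AlgebraicClosure K)) = 1 := by
    rw [← Polynomial.C_mul, ← map_mul, inv_mul_cancel₀ hlcA, map_one, Polynomial.C_1]
  have hdvdmap : (M₀ ^ k).map ι₀ ∣ D.map ι₀ := by
    refine ⟨Polynomial.C (ι₀ A₀.leadingCoeff) ^ k * (Polynomial.C wq * ν), ?_⟩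
    rw [Polynomial.map_pow, hM₀def, Polynomial.map_mul, Polynomial.map_C, hstar3]
    have h1 : (Polynomial.C (ι₀ A₀.leadingCoeff⁻¹) * Polynomial.C (ι₀ A₀.leadingCoeff)
        : Polynomial (AlgebraicClosure K)) ^ k = 1 := by rw [hccA, one_pow]
    linear_combination (-((A₀.map ι₀) ^ k * (Polynomial.C wq * ν))) * h1
  have hdvd : A₀ ^ k ∣ D := by
    obtain ⟨B₂, hB₂⟩ := (Polynomial.map_dvd_map ι₀ hι₀inj (hM₀.pow k)).mp hdvdmap
    exact ⟨Polynomial.C (A₀.leadingCoeff)⁻¹ ^ k * B₂, by rw [hB₂, hM₀def]; ring⟩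
  obtain ⟨B, hB⟩ := hdvd
  have hBmap : B.map ι₀ = Polynomial.C wq * ν := by
    have h2 : (A₀.map ι₀) ^ k * (B.map ι₀) = (A₀.map ι₀) ^ k * (Polynomial.C wq * ν) := by
      rw [← Polynomial.map_pow, ← Polynomial.map_mul, ← hB, hstar3, Polynomial.map_pow]
    exact mul_left_cancel₀ (pow_ne_zero _ hA0'0) h2
  have hBdeg : B.natDegree = (derivative h).natDegree := by
    rw [← natDegree_map_eq_of_injective hι₀inj B, hBmap, natDegree_C_mul hwq0, hνdeg]
  have hdle := natDegree_derivative_le h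
  refine ⟨A₀, B, hB, ?_, ?_⟩
  · rw [hBdeg]; omega
  · intro cz
    haveI := cz
    have hco : (derivative h).coeff (k-1) ≠ 0 := by
      rw [coeff_derivative, show (k - 1 + 1) = k from by omega]
      apply mul_ne_zero
      · show h.coeff k ≠ 0
        have h7 := leadingCoeff_ne_zero.mpr hh0
        rwa [Polynomial.leadingCoeff, hk] at h7
      · exact Nat.cast_add_one_ne_zero (k-1)
    have h6 : k - 1 ≤ (derivative h).natDegree := le_natDegree_of_ne_zero hco
    rw [hBdeg]; omega
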